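/- arXiv:1706.00385 — 3 statements merged into one kernel-verified Lean document; each statement's English description precedes it below -/
import Mathlib

section
/- Let W be the Weyl group of type C_{n+1} and P = P_k the maximal parabolic omitting s_k (with 1 < k ≤ n+1). Then the minimal length representative of the coset z_1 W_P := s_{2t_1} W_P is (2 < 3 < ⋯ < k < \overline{1}), and its length equals 2n+2-k. -/
def bar (n : ℕ) (i : Fin (2*n+2)) : Fin (2*n+2) := ⟨2*n+1 - i, by have := i.isLt; omega⟩

def IsSigned (n : ℕ) (w : Equiv.Perm (Fin (2*n+2))) : Prop :=
  ∀ i, w (bar n i) = bar n (w i)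

def IsOddSymp (n : ℕ) (w : Equiv.Perm (Fin (2*n+2))) : Prop :=
  ∀ j : Fin (2*n+2), (j : ℕ) < n+1 → (w j : ℕ) ≠ 2*n+1

def sgen (n : ℕ) (i : Fin (n+1)) : Equiv.Perm (Fin (2*n+2)) :=
  if h : (i : ℕ) < n then
    (Equiv.swap ⟨i, by omega⟩ ⟨(i : ℕ)+1, by omega⟩) *
      (Equiv.swap ⟨2*n - i, by omega⟩ ⟨2*n+1 - i, by omega⟩)
  else Equiv.swap ⟨n, by omega⟩ ⟨n+1, by omega⟩

noncomputable def len (n : ℕ) (w : Equiv.Perm (Fin (2*n+2))) : ℕ :=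
  sInf {m | ∃ l : List (Fin (n+1)), l.length = m ∧ (l.map (sgen n)).prod = w}

def WP (n k : ℕ) : Subgroup (Equiv.Perm (Fin (2*n+2))) :=
  Subgroup.closure {x | ∃ i : Fin (n+1), (i : ℕ) ≠ k - 1 ∧ x = sgen n i}

noncomputable def IsMinRep (n k : ℕ) (w : Equiv.Perm (Fin (2*n+2))) : Prop :=
  ∀ p ∈ WP n k, len n w ≤ len n (w * p)

noncomputable def cosetLen (n k : ℕ) (w : Equiv.Perm (Fin (2*n+2))) : ℕ :=
  sInf {m | ∃ p ∈ WP n k, len n (w * p) = m}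

def s2t1 (n : ℕ) : Equiv.Perm (Fin (2*n+2)) := Equiv.swap ⟨0, by omega⟩ ⟨2*n+1, by omega⟩

def st1t2 (n : ℕ) : Equiv.Perm (Fin (2*n+2)) :=
  Equiv.swap ⟨0, by omega⟩ ⟨2*n, by omega⟩ * Equiv.swap ⟨1, by omega⟩ ⟨2*n+1, by omega⟩









lemma swap_mk_val {m : ℕ} (a b : ℕ) (ha : a < m) (hb : b < m) (x : Fin m) :
    ((Equiv.swap ⟨a, ha⟩ ⟨b, hb⟩ x : Fin m) : ℕ) = if (x:ℕ) = a then b else if (x:ℕ) = b then a else x := by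
  rw [Equiv.swap_apply_def]
  split_ifs <;> simp_all [Fin.ext_iff] <;> omega

lemma sgen_val (n : ℕ) (i : Fin (n+1)) (x : Fin (2*n+2)) :
    ((sgen n i) x : ℕ) =
      if (x:ℕ) = i then (i:ℕ)+1 else if (x:ℕ) = (i:ℕ)+1 then i
      else if (x:ℕ) = 2*n - i then 2*n+1-i else if (x:ℕ) = 2*n+1-i then 2*n-i else x := by
  have hi := i.isLt
  have hx := x.isLt
  by_cases h : (i:ℕ) < n
  · rw [sgen, dif_pos h, Equiv.Perm.mul_apply, swap_mk_val, swap_mk_val]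
    split_ifs <;> first | omega | exact (‹False›).elim
  · rw [sgen, dif_neg h, swap_mk_val]
    split_ifs <;> first | omega | exact (‹False›).elim

lemma bar_val (n : ℕ) (i : Fin (2*n+2)) : (bar n i : ℕ) = 2*n+1 - i := rfl

lemma sgen_invol (n : ℕ) (i : Fin (n+1)) : sgen n i * sgen n i = 1 := by
  apply Equiv.ext; intro x; apply Fin.ext
  rw [Equiv.Perm.mul_apply, sgen_val, sgen_val, Equiv.Perm.one_apply]
  have hi := i.isLt; have hx := x.isLt
  split_ifs <;> first | omega | exact (‹False›).elim

lemma isSigned_sgen (n : ℕ) (i : Fin (n+1)) : IsSigned n (sgen n i) := by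
  intro x; apply Fin.ext
  rw [bar_val, sgen_val, sgen_val, bar_val]
  have hi := i.isLt; have hx := x.isLt
  split_ifs <;> first | omega | exact (‹False›).elim

lemma IsSigned.mul {n : ℕ} {u v : Equiv.Perm (Fin (2*n+2))} (hu : IsSigned n u)
    (hv : IsSigned n v) : IsSigned n (u * v) := by
  intro x
  rw [Equiv.Perm.mul_apply, Equiv.Perm.mul_apply, hv, hu]

lemma IsSigned.inv {n : ℕ} {u : Equiv.Perm (Fin (2*n+2))} (hu : IsSigned n u) :
    IsSigned n u⁻¹ := by
  intro x
  have h2 : u (bar n (u⁻¹ x)) = bar n x := by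
    rw [hu, (Equiv.Perm.eq_inv_iff_eq (f := u) (x := u⁻¹ x) (y := x)).mp rfl]
  calc u⁻¹ (bar n x) = u⁻¹ (u (bar n (u⁻¹ x))) := by rw [h2]
  _ = bar n (u⁻¹ x) := Equiv.Perm.inv_eq_iff_eq.mpr rfl

lemma isSigned_one (n : ℕ) : IsSigned n 1 := fun x => rfl



lemma sgen_inv (n : ℕ) (i : Fin (n+1)) : (sgen n i)⁻¹ = sgen n i := by
  rw [inv_eq_iff_mul_eq_one]; exact sgen_invol n i

lemma WP_block {n k : ℕ} (hk : 2 ≤ k) (hkn : k ≤ n+1) {q : Equiv.Perm (Fin (2*n+2))}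
    (hq : q ∈ WP n k) : ∀ j : Fin (2*n+2), ((q j : ℕ) < k ↔ (j:ℕ) < k) := by
  refine Subgroup.closure_induction ?_ ?_ ?_ ?_ hq
  · rintro x ⟨i, hik, rfl⟩ j
    have hi := i.isLt; have hj := j.isLt
    rw [sgen_val]
    split_ifs <;> first | omega | exact (‹False›).elim
  · intro j; rfl
  · intro x y _ _ ihx ihy j
    rw [Equiv.Perm.mul_apply, ihx, ihy]
  · intro x _ ih j
    have := ih (x⁻¹ j)
    rw [(Equiv.Perm.eq_inv_iff_eq (f := x) (x := x⁻¹ j) (y := j)).mp rfl] at this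
    exact this.symm

lemma WP_signed {n k : ℕ} {q : Equiv.Perm (Fin (2*n+2))} (hq : q ∈ WP n k) : IsSigned n q := by
  refine Subgroup.closure_induction ?_ (isSigned_one n) ?_ ?_ hq
  · rintro x ⟨i, _, rfl⟩; exact isSigned_sgen n i
  · intro x y _ _ ihx ihy; exact ihx.mul ihy
  · intro x _ ih; exact ih.inv

lemma prod_reverse_sgen (n : ℕ) (l : List (Fin (n+1))) :
    (l.reverse.map (sgen n)).prod = ((l.map (sgen n)).prod)⁻¹ := by
  induction l with
  | nil => simp
  | cons a l ih =>
    simp only [List.reverse_cons, List.map_append, List.prod_append, ih, List.map_cons,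
      List.map_nil, List.prod_cons, List.prod_nil, mul_one, mul_inv_rev, sgen_inv]

lemma WP_expr {n k : ℕ} {q : Equiv.Perm (Fin (2*n+2))} (hq : q ∈ WP n k) :
    ∃ l : List (Fin (n+1)), (l.map (sgen n)).prod = q := by
  refine Subgroup.closure_induction ?_ ⟨[], rfl⟩ ?_ ?_ hq
  · rintro x ⟨i, _, rfl⟩; exact ⟨[i], by simp⟩
  · rintro x y _ _ ⟨l1, h1⟩ ⟨l2, h2⟩
    exact ⟨l1 ++ l2, by rw [List.map_append, List.prod_append, h1, h2]⟩
  · rintro x _ ⟨l, hl⟩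
    exact ⟨l.reverse, by rw [prod_reverse_sgen, hl]⟩

def fE (n k x : ℕ) : ℕ :=
  if x < k-1 then x+1 else if x = k-1 then 2*n+1
  else if x ≤ 2*n+1-k then x else if x = 2*n+2-k then 0 else x-1

def fE' (n k y : ℕ) : ℕ :=
  if y = 0 then 2*n+2-k else if y < k then y-1
  else if y ≤ 2*n+1-k then y else if y = 2*n+1 then k-1 else y+1

def zP (n k : ℕ) (hk : 2 ≤ k) (hkn : k ≤ n+1) : Equiv.Perm (Fin (2*n+2)) where
  toFun x := ⟨fE n k x, by have := x.isLt; unfold fE; split_ifs <;> first | omega | exact (‹False›).elim⟩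
  invFun y := ⟨fE' n k y, by have := y.isLt; unfold fE'; split_ifs <;> first | omega | exact (‹False›).elim⟩
  left_inv x := by
    apply Fin.ext
    show fE' n k (fE n k x) = x
    have := x.isLt; unfold fE fE'; split_ifs <;> first | omega | exact (‹False›).elim
  right_inv y := by
    apply Fin.ext
    show fE n k (fE' n k y) = y
    have := y.isLt; unfold fE fE'; split_ifs <;> first | omega | exact (‹False›).elim

lemma zP_val (n k : ℕ) (hk : 2 ≤ k) (hkn : k ≤ n+1) (x : Fin (2*n+2)) :
    ((zP n k hk hkn) x : ℕ) = fE n k x := rfl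

lemma zP_signed (n k : ℕ) (hk : 2 ≤ k) (hkn : k ≤ n+1) : IsSigned n (zP n k hk hkn) := by
  intro x; apply Fin.ext
  rw [bar_val, zP_val, zP_val, bar_val]
  show fE n k (2*n+1 - (x:ℕ)) = 2*n+1 - fE n k x
  have := x.isLt; unfold fE; split_ifs <;> first | omega | exact (‹False›).elim



def invC (n : ℕ) (w : Equiv.Perm (Fin (2*n+2))) : ℕ :=
  (Finset.univ.filter
    (fun p : Fin (2*n+2) × Fin (2*n+2) => p.1 < p.2 ∧ w p.2 < w p.1)).card

def negC (n : ℕ) (w : Equiv.Perm (Fin (2*n+2))) : ℕ :=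
  (Finset.univ.filter (fun i : Fin (2*n+2) => (i:ℕ) < n+1 ∧ n+1 ≤ (w i : ℕ))).card

def NC (n : ℕ) (w : Equiv.Perm (Fin (2*n+2))) : ℕ := invC n w + negC n w

lemma swap_val' {m : ℕ} (a b x : Fin m) :
    ((Equiv.swap a b) x : ℕ) = if (x:ℕ) = (a:ℕ) then (b:ℕ) else if (x:ℕ) = (b:ℕ) then (a:ℕ) else (x:ℕ) := by
  rw [Equiv.swap_apply_def]
  split_ifs <;> simp_all [Fin.ext_iff]

lemma invC_one (n : ℕ) : invC n 1 = 0 := by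
  rw [invC, Finset.card_eq_zero, Finset.filter_eq_empty_iff]
  rintro p - ⟨h1, h2⟩
  simp only [Equiv.Perm.one_apply] at h2
  exact absurd (h1.trans h2) (lt_irrefl _)

lemma negC_one (n : ℕ) : negC n 1 = 0 := by
  rw [negC, Finset.card_eq_zero, Finset.filter_eq_empty_iff]
  rintro i - ⟨h1, h2⟩
  simp only [Equiv.Perm.one_apply] at h2
  omega

lemma invC_mul_swap_le (n : ℕ) (w : Equiv.Perm (Fin (2*n+2))) (a b : Fin (2*n+2))
    (hab : (b:ℕ) = (a:ℕ)+1) : invC n (w * Equiv.swap a b) ≤ invC n w + 1 := by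
  set σ := Equiv.swap a b with hσ
  set S := Finset.univ.filter
    (fun p : Fin (2*n+2) × Fin (2*n+2) => p.1 < p.2 ∧ w p.2 < w p.1) with hS
  have hsub : Finset.univ.filter
      (fun p : Fin (2*n+2) × Fin (2*n+2) => p.1 < p.2 ∧ (w * σ) p.2 < (w * σ) p.1)
      ⊆ insert (a, b) (S.image (fun p => (σ p.1, σ p.2))) := by
    intro p hp
    rw [Finset.mem_filter] at hp
    simp only [Finset.mem_filter, Finset.mem_univ, true_and, Equiv.Perm.mul_apply] at hp
    obtain ⟨h1, h2⟩ := hp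
    rw [Finset.mem_insert]
    by_cases hpa : p = (a, b)
    · exact Or.inl hpa
    · right
      have hne : ¬((p.1:ℕ) = (a:ℕ) ∧ (p.2:ℕ) = (b:ℕ)) := by
        intro ⟨u1, u2⟩
        exact hpa (Prod.ext (Fin.ext u1) (Fin.ext u2))
      have hlt : σ p.1 < σ p.2 := by
        rw [Fin.lt_def, swap_val', swap_val']
        rw [Fin.lt_def] at h1
        have := p.1.isLt; have := p.2.isLt
        split_ifs <;> omega
      rw [Finset.mem_image]
      refine ⟨(σ p.1, σ p.2), ?_, ?_⟩
      · simp only [hS, Finset.mem_filter, Finset.mem_univ, true_and]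
        exact ⟨hlt, h2⟩
      · apply Prod.ext <;> simp [hσ, Equiv.swap_apply_self]
  calc invC n (w * σ) ≤ (insert (a, b) (S.image (fun p => (σ p.1, σ p.2)))).card :=
        Finset.card_le_card hsub
    _ ≤ (S.image (fun p => (σ p.1, σ p.2))).card + 1 := Finset.card_insert_le _ _
    _ ≤ invC n w + 1 := by
        have := Finset.card_image_le (s := S) (f := fun p => (σ p.1, σ p.2))
        rw [invC, ← hS]; omega

lemma negC_mul_swap_low (n : ℕ) (w : Equiv.Perm (Fin (2*n+2))) (a b : Fin (2*n+2))
    (ha : (a:ℕ) < n+1) (hb : (b:ℕ) < n+1) : negC n (w * Equiv.swap a b) ≤ negC n w := by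
  set σ := Equiv.swap a b with hσ
  set S := Finset.univ.filter (fun i : Fin (2*n+2) => (i:ℕ) < n+1 ∧ n+1 ≤ (w i : ℕ)) with hS
  have hsub : Finset.univ.filter
      (fun i : Fin (2*n+2) => (i:ℕ) < n+1 ∧ n+1 ≤ ((w * σ) i : ℕ)) ⊆ S.image σ := by
    intro j hj
    rw [Finset.mem_filter] at hj
    simp only [Finset.mem_filter, Finset.mem_univ, true_and, Equiv.Perm.mul_apply] at hj
    rw [Finset.mem_image]
    refine ⟨σ j, ?_, Equiv.swap_apply_self _ _ _⟩
    simp only [hS, Finset.mem_filter, Finset.mem_univ, true_and]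
    constructor
    · rw [swap_val']
      have := j.isLt
      split_ifs <;> omega
    · exact hj.2
  calc negC n (w * σ) ≤ (S.image σ).card := Finset.card_le_card hsub
    _ ≤ negC n w := by have := Finset.card_image_le (s := S) (f := σ); rw [negC, ← hS]; omega

lemma negC_mul_swap_high (n : ℕ) (w : Equiv.Perm (Fin (2*n+2))) (a b : Fin (2*n+2))
    (ha : n+1 ≤ (a:ℕ)) (hb : n+1 ≤ (b:ℕ)) : negC n (w * Equiv.swap a b) ≤ negC n w := by
  apply Finset.card_le_card
  intro j hj
  rw [Finset.mem_filter] at hj ⊢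
  simp only [Finset.mem_filter, Finset.mem_univ, true_and, Equiv.Perm.mul_apply] at hj ⊢
  obtain ⟨h1, h2⟩ := hj
  have hja : j ≠ a := fun h => by subst h; omega
  have hjb : j ≠ b := fun h => by subst h; omega
  rw [Equiv.swap_apply_of_ne_of_ne hja hjb] at h2
  exact ⟨h1, h2⟩

lemma negC_mul_swap_mid (n : ℕ) (w : Equiv.Perm (Fin (2*n+2))) (a b : Fin (2*n+2))
    (ha : (a:ℕ) = n) (hb : (b:ℕ) = n+1) : negC n (w * Equiv.swap a b) ≤ negC n w + 1 := by
  set S := Finset.univ.filter (fun i : Fin (2*n+2) => (i:ℕ) < n+1 ∧ n+1 ≤ (w i : ℕ)) with hS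
  have hsub : Finset.univ.filter
      (fun i : Fin (2*n+2) => (i:ℕ) < n+1 ∧ n+1 ≤ ((w * Equiv.swap a b) i : ℕ)) ⊆ insert a S := by
    intro j hj
    rw [Finset.mem_filter] at hj
    simp only [Finset.mem_filter, Finset.mem_univ, true_and, Equiv.Perm.mul_apply] at hj
    obtain ⟨h1, h2⟩ := hj
    rw [Finset.mem_insert]
    by_cases hja : j = a
    · exact Or.inl hja
    · right
      have hja' : j ≠ a := hja
      have hjb : j ≠ b := fun h => by subst h; omega
      rw [Equiv.swap_apply_of_ne_of_ne hja' hjb] at h2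
      simp only [hS, Finset.mem_filter, Finset.mem_univ, true_and]
      exact ⟨h1, h2⟩
  calc negC n (w * Equiv.swap a b) ≤ (insert a S).card := Finset.card_le_card hsub
    _ ≤ S.card + 1 := Finset.card_insert_le _ _

lemma NC_mul_sgen_le (n : ℕ) (w : Equiv.Perm (Fin (2*n+2))) (i : Fin (n+1)) :
    NC n (w * sgen n i) ≤ NC n w + 2 := by
  have hi := i.isLt
  by_cases h : (i:ℕ) < n
  · rw [sgen, dif_pos h, ← mul_assoc]
    have h1 := invC_mul_swap_le n w ⟨i, by omega⟩ ⟨(i:ℕ)+1, by omega⟩ (by simp)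
    have h2 := invC_mul_swap_le n (w * Equiv.swap ⟨i, by omega⟩ ⟨(i:ℕ)+1, by omega⟩)
      ⟨2*n - i, by omega⟩ ⟨2*n+1 - i, by omega⟩ (by simp <;> omega)
    have h3 := negC_mul_swap_low n w (⟨i, by omega⟩ : Fin (2*n+2)) ⟨(i:ℕ)+1, by omega⟩
      (by simp <;> omega) (by simp <;> omega)
    have h4 := negC_mul_swap_high n (w * Equiv.swap ⟨i, by omega⟩ ⟨(i:ℕ)+1, by omega⟩)
      (⟨2*n - i, by omega⟩ : Fin (2*n+2)) ⟨2*n+1 - i, by omega⟩ (by simp <;> omega) (by simp <;> omega)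
    rw [NC, NC]
    omega
  · rw [sgen, dif_neg h]
    have h1 := invC_mul_swap_le n w ⟨n, by omega⟩ ⟨n+1, by omega⟩ (by simp)
    have h2 := negC_mul_swap_mid n w (⟨n, by omega⟩ : Fin (2*n+2)) ⟨n+1, by omega⟩
      (by simp) (by simp)
    rw [NC, NC]
    omega

lemma NC_prod_le (n : ℕ) (l : List (Fin (n+1))) :
    NC n ((l.map (sgen n)).prod) ≤ 2 * l.length := by
  induction l using List.reverseRecOn with
  | nil => simp [NC, invC_one, negC_one]
  | append_singleton l a ih =>
    rw [List.map_append, List.prod_append, List.map_singleton, List.prod_singleton]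
    have := NC_mul_sgen_le n ((l.map (sgen n)).prod) a
    simp only [List.length_append, List.length_singleton]
    omega

lemma NC_le_two_len (n : ℕ) (w : Equiv.Perm (Fin (2*n+2)))
    (hw : ∃ l : List (Fin (n+1)), (l.map (sgen n)).prod = w) : NC n w ≤ 2 * len n w := by
  obtain ⟨l0, hl0⟩ := hw
  have hne : {m | ∃ l : List (Fin (n+1)), l.length = m ∧ (l.map (sgen n)).prod = w}.Nonempty :=
    ⟨l0.length, l0, rfl, hl0⟩
  obtain ⟨l, hlen, hprod⟩ := Nat.sInf_mem hne
  rw [len, ← hlen, ← hprod]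
  exact NC_prod_le n l



def mkF (n i : ℕ) : Fin (n+1) := ⟨i % (n+1), Nat.mod_lt _ (Nat.succ_pos n)⟩

lemma mkF_val (n i : ℕ) (h : i < n+1) : (mkF n i : ℕ) = i := Nat.mod_eq_of_lt h

def ascWord (n t : ℕ) : List (Fin (n+1)) := (List.range t).map (mkF n)

def fq (n t x : ℕ) : ℕ :=
  if x < t then x+1 else if x = t then 0
  else if x < 2*n+1-t then x else if x = 2*n+1-t then 2*n+1 else x-1

lemma asc_prod_val (n : ℕ) : ∀ t, t ≤ n → ∀ x : Fin (2*n+2),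
    ((((ascWord n t).map (sgen n)).prod) x : ℕ) = fq n t x := by
  intro t
  induction t with
  | zero =>
    intro _ x
    have hx := x.isLt
    simp only [ascWord, List.range_zero, List.map_nil, List.prod_nil, Equiv.Perm.one_apply]
    unfold fq; split_ifs <;> omega
  | succ t ih =>
    intro ht x
    have h1 : ascWord n (t+1) = ascWord n t ++ [mkF n t] := by
      rw [ascWord, List.range_succ, List.map_append, ascWord]; rfl
    rw [h1, List.map_append, List.prod_append, List.map_singleton, List.prod_singleton,
      Equiv.Perm.mul_apply, ih (by omega), sgen_val, mkF_val n t (by omega)]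
    have hx := x.isLt
    unfold fq; split_ifs <;> omega

set_option maxHeartbeats 1600000 in
lemma M_prod_val (n : ℕ) (x : Fin (2*n+2)) :
    ((((ascWord n (n+1)).map (sgen n)).prod) x : ℕ) = fE n (n+1) x := by
  have h1 : ascWord n (n+1) = ascWord n n ++ [mkF n n] := by
    rw [ascWord, List.range_succ, List.map_append, ascWord]; rfl
  rw [h1, List.map_append, List.prod_append, List.map_singleton, List.prod_singleton,
    Equiv.Perm.mul_apply, asc_prod_val n n le_rfl, sgen_val, mkF_val n n (by omega)]
  have hx := x.isLt
  unfold fq fE; split_ifs <;> first | omega | exact (‹False›).elim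

def descWord (n k d : ℕ) : List (Fin (n+1)) := (List.range d).map (fun e => mkF n (n-1-e))

set_option maxHeartbeats 1600000 in
lemma desc_prod_val (n k : ℕ) (hk : 2 ≤ k) (hkn : k ≤ n+1) : ∀ d, d ≤ n-(k-1) →
    ∀ x : Fin (2*n+2),
    ((((ascWord n (n+1) ++ descWord n k d).map (sgen n)).prod) x : ℕ) = fE n (n+1-d) x := by
  intro d
  induction d with
  | zero =>
    intro _ x
    simp only [descWord, List.range_zero, List.map_nil, List.append_nil, Nat.sub_zero]
    rw [M_prod_val]
  | succ d ih =>
    intro hd x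
    have h1 : ascWord n (n+1) ++ descWord n k (d+1)
        = (ascWord n (n+1) ++ descWord n k d) ++ [mkF n (n-1-d)] := by
      rw [descWord, List.range_succ, List.map_append, descWord, List.append_assoc]; rfl
    rw [h1, List.map_append, List.prod_append, List.map_singleton, List.prod_singleton,
      Equiv.Perm.mul_apply, ih (by omega), sgen_val, mkF_val n _ (by omega)]
    have hx := x.isLt
    unfold fE; split_ifs <;> first | omega | exact (‹False›).elim

def zWord (n k : ℕ) : List (Fin (n+1)) := ascWord n (n+1) ++ descWord n k (n-(k-1))

lemma zWord_length (n k : ℕ) (hk : 2 ≤ k) (hkn : k ≤ n+1) : (zWord n k).length = 2*n+2-k := by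
  rw [zWord, List.length_append, ascWord, descWord, List.length_map, List.length_map,
    List.length_range, List.length_range]
  omega

lemma zWord_prod (n k : ℕ) (hk : 2 ≤ k) (hkn : k ≤ n+1) :
    (((zWord n k).map (sgen n)).prod) = zP n k hk hkn := by
  apply Equiv.ext; intro x; apply Fin.ext
  rw [zWord, desc_prod_val n k hk hkn _ le_rfl, zP_val]
  have h2 : n+1-(n-(k-1)) = k := by omega
  rw [h2]

lemma len_z_le (n k : ℕ) (hk : 2 ≤ k) (hkn : k ≤ n+1) : len n (zP n k hk hkn) ≤ 2*n+2-k := by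
  apply Nat.sInf_le
  exact ⟨zWord n k, zWord_length n k hk hkn, zWord_prod n k hk hkn⟩

lemma Pk1_mem (n k : ℕ) (hk : 2 ≤ k) (hkn : k ≤ n+1) :
    (((ascWord n (k-1)).map (sgen n)).prod) ∈ WP n k := by
  apply list_prod_mem
  intro x hx
  rw [ascWord, List.map_map, List.mem_map] at hx
  obtain ⟨i, hi, rfl⟩ := hx
  rw [List.mem_range] at hi
  apply Subgroup.subset_closure
  exact ⟨mkF n i, by rw [mkF_val n i (by omega)]; omega, rfl⟩

set_option maxHeartbeats 1600000 in
lemma z_coset (n k : ℕ) (hk : 2 ≤ k) (hkn : k ≤ n+1) :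
    zP n k hk hkn = s2t1 n * (((ascWord n (k-1)).map (sgen n)).prod) := by
  apply Equiv.ext; intro x; apply Fin.ext
  rw [Equiv.Perm.mul_apply, s2t1, swap_mk_val, asc_prod_val n (k-1) (by omega) x, zP_val]
  have hx := x.isLt
  unfold fq fE; split_ifs <;> first | omega | exact (‹False›).elim

lemma z_mem_coset (n k : ℕ) (hk : 2 ≤ k) (hkn : k ≤ n+1) :
    (s2t1 n)⁻¹ * zP n k hk hkn ∈ WP n k := by
  rw [z_coset n k hk hkn, inv_mul_cancel_left]
  exact Pk1_mem n k hk hkn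

lemma coset_char (n k : ℕ) (hk : 2 ≤ k) (hkn : k ≤ n+1) {w : Equiv.Perm (Fin (2*n+2))}
    (hw : (s2t1 n)⁻¹ * w ∈ WP n k) :
    ∀ j : Fin (2*n+2), ((j:ℕ) < k ↔ ((w j:ℕ) = 2*n+1 ∨ (1 ≤ (w j:ℕ) ∧ (w j:ℕ) < k))) := by
  have hwq : w = s2t1 n * ((s2t1 n)⁻¹ * w) := by rw [mul_inv_cancel_left]
  have hblk := WP_block hk hkn hw
  intro j
  have happ : (w j : ℕ) = if (((s2t1 n)⁻¹ * w) j : ℕ) = 0 then 2*n+1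
      else if (((s2t1 n)⁻¹ * w) j : ℕ) = 2*n+1 then 0 else (((s2t1 n)⁻¹ * w) j : ℕ) := by
    conv_lhs => rw [hwq]
    rw [Equiv.Perm.mul_apply, s2t1, swap_mk_val]
  have hbj := hblk j
  have hqlt := (((s2t1 n)⁻¹ * w) j).isLt
  have hjlt := j.isLt
  by_cases h0 : (((s2t1 n)⁻¹ * w) j : ℕ) = 0
  · rw [if_pos h0] at happ; omega
  · rw [if_neg h0] at happ
    by_cases h1 : (((s2t1 n)⁻¹ * w) j : ℕ) = 2*n+1
    · rw [if_pos h1] at happ; omega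
    · rw [if_neg h1] at happ; omega

set_option maxHeartbeats 1600000 in
lemma NC_main (n k : ℕ) (hk : 2 ≤ k) (hkn : k ≤ n+1) {w : Equiv.Perm (Fin (2*n+2))}
    (hsgn : IsSigned n w)
    (hch : ∀ j : Fin (2*n+2), ((j:ℕ) < k ↔ ((w j:ℕ) = 2*n+1 ∨ (1 ≤ (w j:ℕ) ∧ (w j:ℕ) < k)))) :
    2*(2*n+2-k) ≤ NC n w ∧ (NC n w ≤ 2*(2*n+2-k) → w = zP n k hk hkn) := by
  classical
  set Sinv := Finset.univ.filter
    (fun q : Fin (2*n+2) × Fin (2*n+2) => q.1 < q.2 ∧ w q.2 < w q.1) with hSv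
  have hinvdef : invC n w = Sinv.card := rfl
  set Sneg := Finset.univ.filter
    (fun i : Fin (2*n+2) => (i:ℕ) < n+1 ∧ n+1 ≤ (w i : ℕ)) with hSn
  have hnegdef : negC n w = Sneg.card := rfl
  have hNCdef : NC n w = invC n w + negC n w := rfl
  obtain ⟨p, hp⟩ : ∃ p : Fin (2*n+2), w p = ⟨2*n+1, by omega⟩ :=
    ⟨w⁻¹ ⟨2*n+1, by omega⟩, Equiv.Perm.eq_inv_iff_eq.mp rfl⟩
  have hpv : (w p : ℕ) = 2*n+1 := by rw [hp]
  have hpk : (p:ℕ) < k := (hch p).mpr (Or.inl hpv)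
  set p' : Fin (2*n+2) := bar n p with hp'def
  have hp'v : (p' : ℕ) = 2*n+1 - (p:ℕ) := bar_val n p
  have hp0 : (w p' : ℕ) = 0 := by
    rw [hp'def, hsgn p, bar_val, hpv]
    omega
  have hplt : p < p' := by rw [Fin.lt_def, hp'v]; omega
  -- the two explicit families of inversions
  set X1 := (Finset.Ioi p).image (fun j => ((p, j) : Fin (2*n+2) × Fin (2*n+2))) with hX1
  set X2 := (Finset.Iio p').image (fun i => ((i, p') : Fin (2*n+2) × Fin (2*n+2))) with hX2
  have hX1card : X1.card = 2*n+2-1-(p:ℕ) := by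
    rw [hX1, Finset.card_image_of_injective _ (fun a b h => by simpa using h), Fin.card_Ioi]
  have hX2card : X2.card = (p':ℕ) := by
    rw [hX2, Finset.card_image_of_injective _ (fun a b h => by simpa using h), Fin.card_Iio]
  have hX1sub : X1 ⊆ Sinv := by
    intro q hq
    rw [hX1, Finset.mem_image] at hq
    obtain ⟨j, hj, rfl⟩ := hq
    rw [Finset.mem_Ioi] at hj
    rw [hSv, Finset.mem_filter]
    refine ⟨Finset.mem_univ _, hj, ?_⟩
    have hne : w j ≠ w p := fun h => absurd (w.injective h) (ne_of_gt hj)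
    show w j < w p
    rw [Fin.lt_def, hpv]
    have := (w j).isLt
    have : (w j : ℕ) ≠ 2*n+1 := fun h => hne (Fin.ext (by rw [hpv, h]))
    omega
  have hX2sub : X2 ⊆ Sinv := by
    intro q hq
    rw [hX2, Finset.mem_image] at hq
    obtain ⟨i, hi, rfl⟩ := hq
    rw [Finset.mem_Iio] at hi
    rw [hSv, Finset.mem_filter]
    refine ⟨Finset.mem_univ _, hi, ?_⟩
    have hne : w i ≠ w p' := fun h => absurd (w.injective h) (ne_of_lt hi)
    show w p' < w i
    rw [Fin.lt_def, hp0]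
    have : (w i : ℕ) ≠ 0 := fun h => hne (Fin.ext (by rw [hp0, h]))
    omega
  have hX12 : X1 ∩ X2 = {(p, p')} := by
    apply Finset.Subset.antisymm
    · intro q hq
      rw [Finset.mem_inter, hX1, hX2, Finset.mem_image, Finset.mem_image] at hq
      obtain ⟨⟨a, _, ha⟩, ⟨b, _, hb⟩⟩ := hq
      rw [Finset.mem_singleton]
      have h1 : q.1 = p := by rw [← ha]
      have h2 : q.2 = p' := by rw [← hb]
      exact Prod.ext h1 h2
    · rw [Finset.singleton_subset_iff, Finset.mem_inter, hX1, hX2]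
      constructor
      · exact Finset.mem_image.mpr ⟨p', Finset.mem_Ioi.mpr hplt, rfl⟩
      · exact Finset.mem_image.mpr ⟨p, Finset.mem_Iio.mpr hplt, rfl⟩
  have hic : (X1 ∩ X2).card = 1 := by rw [hX12]; exact Finset.card_singleton _
  have huc := Finset.card_union_add_card_inter X1 X2
  have hunion_sub : X1 ∪ X2 ⊆ Sinv := Finset.union_subset hX1sub hX2sub
  have hinvlb := Finset.card_le_card hunion_sub
  have hpmem : p ∈ Sneg := by
    rw [hSn, Finset.mem_filter]
    exact ⟨Finset.mem_univ _, by omega, by omega⟩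
  have hneg1 : 1 ≤ Sneg.card := Finset.card_pos.mpr ⟨p, hpmem⟩
  have hbase : 2*(2*n+2-k) ≤ NC n w := by
    rw [hNCdef, hinvdef, hnegdef]
    omega
  refine ⟨hbase, ?_⟩
  intro hNC
  have hpval : (p:ℕ) = k-1 := by
    rw [hNCdef, hinvdef, hnegdef] at hNC
    omega
  have hp'val : (p':ℕ) = 2*n+2-k := by omega
  -- extra inversion: contradiction
  have key : ∀ i j : Fin (2*n+2), i < j → w j < w i → i ≠ p → j ≠ p' → False := by
    intro i j hij hwij hip hjp
    have hnotin : (i,j) ∉ X1 ∪ X2 := by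
      rw [Finset.mem_union]
      rintro (hm | hm)
      · rw [hX1, Finset.mem_image] at hm
        obtain ⟨a, _, ha⟩ := hm
        exact hip (congrArg Prod.fst ha).symm
      · rw [hX2, Finset.mem_image] at hm
        obtain ⟨a, _, ha⟩ := hm
        exact hjp (congrArg Prod.snd ha).symm
    have hmem : (i,j) ∈ Sinv := by
      rw [hSv, Finset.mem_filter]
      exact ⟨Finset.mem_univ _, hij, hwij⟩
    have hins : insert (i,j) (X1 ∪ X2) ⊆ Sinv :=
      Finset.insert_subset hmem hunion_sub
    have hcard := Finset.card_le_card hins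
    rw [Finset.card_insert_of_notMem hnotin] at hcard
    rw [hNCdef, hinvdef, hnegdef] at hNC
    omega
  -- extra sign change: contradiction
  have key2 : ∀ i : Fin (2*n+2), i ≠ p → (i:ℕ) < n+1 → n+1 ≤ (w i:ℕ) → False := by
    intro i hip h1 h2
    have hmem : i ∈ Sneg := by
      rw [hSn, Finset.mem_filter]
      exact ⟨Finset.mem_univ _, h1, h2⟩
    have hsub2 : ({i, p} : Finset (Fin (2*n+2))) ⊆ Sneg := by
      intro x hx
      rw [Finset.mem_insert, Finset.mem_singleton] at hx
      rcases hx with rfl | rfl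
      · exact hmem
      · exact hpmem
    have hcard := Finset.card_le_card hsub2
    rw [Finset.card_pair hip] at hcard
    rw [hNCdef, hinvdef, hnegdef] at hNC
    omega
  -- values on the first block
  have hwinj : ∀ a b : Fin (2*n+2), (w a : ℕ) = (w b : ℕ) → (a:ℕ) = (b:ℕ) := by
    intro a b h
    exact congrArg Fin.val (w.injective (Fin.ext h))
  have hvals : ∀ j : Fin (2*n+2), (j:ℕ) < k-1 →
      1 ≤ (w j : ℕ) ∧ (w j : ℕ) ≤ k-1 := by
    intro j hj
    have hchm := (hch j).mp (by omega)
    rcases hchm with h | h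
    · exfalso
      have h2 : (j:ℕ) = (p:ℕ) := hwinj j p (by rw [hpv, h])
      omega
    · omega
  have hmono : ∀ i j : Fin (2*n+2), (i:ℕ) < (j:ℕ) → (j:ℕ) < k-1 →
      (w i : ℕ) < (w j : ℕ) := by
    intro i j hij hj
    by_contra hcon
    push_neg at hcon
    have hne : (w j : ℕ) ≠ (w i : ℕ) := by
      intro h
      have h2 : (j:ℕ) = (i:ℕ) := hwinj _ _ h
      omega
    refine key i j (by rw [Fin.lt_def]; omega) (by rw [Fin.lt_def]; omega) ?_ ?_
    · intro h
      have h2 : (i:ℕ) = (p:ℕ) := congrArg Fin.val h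
      omega
    · intro h
      have h2 : (j:ℕ) = (p':ℕ) := congrArg Fin.val h
      omega
  have hlow : ∀ jn : ℕ, ∀ j : Fin (2*n+2), (j:ℕ) = jn → jn < k-1 → jn+1 ≤ (w j : ℕ) := by
    intro jn
    induction jn with
    | zero =>
      intro j hj h
      have := (hvals j (by omega)).1
      omega
    | succ jj ih =>
      intro j hj h
      obtain ⟨j', hj'⟩ : ∃ j' : Fin (2*n+2), (j':ℕ) = jj := ⟨⟨jj, by omega⟩, rfl⟩
      have h1 := hmono j' j (by omega) (by omega)
      have h2 := ih j' hj' (by omega)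
      omega
  have hup : ∀ d : ℕ, ∀ j : Fin (2*n+2), (j:ℕ) < k-1 → k-2-(j:ℕ) = d → (w j : ℕ) ≤ (j:ℕ)+1 := by
    intro d
    induction d with
    | zero =>
      intro j h1 h2
      have := (hvals j h1).2
      omega
    | succ dd ih =>
      intro j h1 h2
      obtain ⟨j', hj'⟩ : ∃ j' : Fin (2*n+2), (j':ℕ) = (j:ℕ)+1 := ⟨⟨(j:ℕ)+1, by omega⟩, rfl⟩
      have h4 := ih j' (by omega) (by omega)
      have h5 := hmono j j' (by omega) (by omega)
      omega
  have hfirst : ∀ j : Fin (2*n+2), (j:ℕ) < k-1 → (w j : ℕ) = (j:ℕ)+1 := by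
    intro j hj
    have := hlow (j:ℕ) j rfl hj
    have := hup (k-2-(j:ℕ)) j hj rfl
    omega
  -- values on the middle block
  have hmvals : ∀ j : Fin (2*n+2), k ≤ (j:ℕ) → (j:ℕ) ≤ n →
      k ≤ (w j : ℕ) ∧ (w j : ℕ) ≤ n := by
    intro j h1 h2
    have hnotS : ¬ ((w j : ℕ) = 2*n+1 ∨ (1 ≤ (w j : ℕ) ∧ (w j : ℕ) < k)) := by
      intro h
      have h5 := (hch j).mpr h
      omega
    have hne0 : (w j : ℕ) ≠ 0 := by
      intro h
      have h6 : (j:ℕ) = (p':ℕ) := hwinj j p' (by rw [hp0, h])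
      omega
    have hlen : (w j : ℕ) < 2*n+2 := (w _).isLt
    have hltn : (w j : ℕ) ≤ n := by
      by_contra hcon
      push_neg at hcon
      refine key2 j ?_ (by omega) (by omega)
      intro h
      have h7 : (j:ℕ) = (p:ℕ) := congrArg Fin.val h
      omega
    omega
  have hmmono : ∀ i j : Fin (2*n+2), k ≤ (i:ℕ) → (i:ℕ) < (j:ℕ) → (j:ℕ) ≤ n →
      (w i : ℕ) < (w j : ℕ) := by
    intro i j h1 hij hj
    by_contra hcon
    push_neg at hcon
    have hne : (w j : ℕ) ≠ (w i : ℕ) := by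
      intro h
      have h2 : (j:ℕ) = (i:ℕ) := hwinj _ _ h
      omega
    refine key i j (by rw [Fin.lt_def]; omega) (by rw [Fin.lt_def]; omega) ?_ ?_
    · intro h
      have h2 : (i:ℕ) = (p:ℕ) := congrArg Fin.val h
      omega
    · intro h
      have h2 : (j:ℕ) = (p':ℕ) := congrArg Fin.val h
      omega
  have hmlow : ∀ d : ℕ, ∀ j : Fin (2*n+2), k ≤ (j:ℕ) → (j:ℕ) ≤ n → (j:ℕ) - k = d →
      (j:ℕ) ≤ (w j : ℕ) := by
    intro d
    induction d with
    | zero =>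
      intro j h1 h2 h3
      have h4 := (hmvals j h1 h2).1
      omega
    | succ dd ih =>
      intro j h1 h2 h3
      obtain ⟨j', hj'⟩ : ∃ j' : Fin (2*n+2), (j':ℕ) = (j:ℕ)-1 := ⟨⟨(j:ℕ)-1, by omega⟩, rfl⟩
      have h4 := ih j' (by omega) (by omega) (by omega)
      have h5 := hmmono j' j (by omega) (by omega) h2
      omega
  have hmup : ∀ d : ℕ, ∀ j : Fin (2*n+2), k ≤ (j:ℕ) → (j:ℕ) ≤ n → n - (j:ℕ) = d →
      (w j : ℕ) ≤ (j:ℕ) := by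
    intro d
    induction d with
    | zero =>
      intro j h1 h2 h3
      have h4 := (hmvals j h1 h2).2
      omega
    | succ dd ih =>
      intro j h1 h2 h3
      obtain ⟨j', hj'⟩ : ∃ j' : Fin (2*n+2), (j':ℕ) = (j:ℕ)+1 := ⟨⟨(j:ℕ)+1, by omega⟩, rfl⟩
      have h4 := ih j' (by omega) (by omega) (by omega)
      have h5 := hmmono j j' h1 (by omega) (by omega)
      omega
  have hmid : ∀ j : Fin (2*n+2), k ≤ (j:ℕ) → (j:ℕ) ≤ n → (w j : ℕ) = (j:ℕ) := by
    intro j h1 h2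
    have := hmlow ((j:ℕ)-k) j h1 h2 rfl
    have := hmup (n-(j:ℕ)) j h1 h2 rfl
    omega
  -- first half determined
  have hhalf : ∀ j : Fin (2*n+2), (j:ℕ) ≤ n → (w j : ℕ) = fE n k (j:ℕ) := by
    intro j hj
    rcases lt_trichotomy ((j:ℕ)) (k-1) with h | h | h
    · have hW : (w j : ℕ) = (j:ℕ)+1 := hfirst j h
      rw [hW]
      unfold fE; split_ifs <;> omega
    · have hjp : j = p := Fin.ext (by omega)
      rw [hjp, hpv]
      unfold fE; split_ifs <;> omega
    · have hW : (w j : ℕ) = (j:ℕ) := hmid j (by omega) hj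
      rw [hW]
      unfold fE; split_ifs <;> omega
  apply Equiv.ext; intro x; apply Fin.ext
  rw [zP_val]
  by_cases hx : (x:ℕ) ≤ n
  · exact hhalf x hx
  · have hy : (bar n (bar n x)) = x := Fin.ext (by rw [bar_val, bar_val]; have := x.isLt; omega)
    have h1 : (w (bar n (bar n x)) : ℕ) = 2*n+1 - (w (bar n x) : ℕ) := by
      rw [hsgn (bar n x), bar_val]
    have h2 : (w (bar n x) : ℕ) = fE n k ((bar n x : Fin (2*n+2)) : ℕ) :=
      hhalf (bar n x) (by rw [bar_val]; omega)
    rw [hy] at h1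
    rw [h1, h2, bar_val]
    have hxlt := x.isLt
    unfold fE; split_ifs <;> first | omega | exact (‹False›).elim










/-- The minimal length representative of the coset `z_1 W_{P_k} = s_{2t_1} W_{P_k}` in the
Weyl group of type `C_{n+1}` (`1 < k ≤ n+1`) is the sequence `(2 < 3 < ⋯ < k < \overline 1)`
(i.e. value `j+1` in position `j` for `j < k`, and value `\overline 1 = 2n+2` in position `k`),
and its length equals `2n+2-k`. -/
theorem stmt4 (n k : ℕ) (hk : 2 ≤ k) (hkn : k ≤ n+1) :
    ∃ z : Equiv.Perm (Fin (2*n+2)), IsSigned n z ∧ (s2t1 n)⁻¹ * z ∈ WP n k ∧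
      IsMinRep n k z ∧
      (∀ j : ℕ, ∀ _hj : j + 1 < k, (z ⟨j, by omega⟩ : ℕ) = j + 1) ∧
      (z ⟨k-1, by omega⟩ : ℕ) = 2*n+1 ∧
      len n z = 2*n+2-k ∧
      ∀ z' : Equiv.Perm (Fin (2*n+2)), IsSigned n z' → (s2t1 n)⁻¹ * z' ∈ WP n k →
        IsMinRep n k z' → z' = z := by
  have hch := coset_char n k hk hkn (z_mem_coset n k hk hkn)
  have hlb := (NC_main n k hk hkn (zP_signed n k hk hkn) hch).1
  have hexprz : ∃ l : List (Fin (n+1)), (l.map (sgen n)).prod = zP n k hk hkn :=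
    ⟨zWord n k, zWord_prod n k hk hkn⟩
  have hub := NC_le_two_len n _ hexprz
  have hlen : len n (zP n k hk hkn) = 2*n+2-k := by
    have h1 := len_z_le n k hk hkn
    omega
  refine ⟨zP n k hk hkn, zP_signed n k hk hkn, z_mem_coset n k hk hkn, ?_, ?_, ?_, hlen, ?_⟩
  · -- minimal representative
    intro q hq
    rw [hlen]
    have hm : (s2t1 n)⁻¹ * (zP n k hk hkn * q) ∈ WP n k := by
      rw [← mul_assoc]
      exact mul_mem (z_mem_coset n k hk hkn) hq
    have hsg : IsSigned n (zP n k hk hkn * q) := (zP_signed n k hk hkn).mul (WP_signed hq)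
    have hch2 := coset_char n k hk hkn hm
    have hlb2 := (NC_main n k hk hkn hsg hch2).1
    have hexpr : ∃ l : List (Fin (n+1)), (l.map (sgen n)).prod = zP n k hk hkn * q := by
      obtain ⟨l2, hl2⟩ := WP_expr hq
      exact ⟨zWord n k ++ l2, by
        rw [List.map_append, List.prod_append, zWord_prod, hl2]⟩
    have hub2 := NC_le_two_len n _ hexpr
    omega
  · -- values j+1
    intro j hj
    rw [zP_val]
    show fE n k j = j + 1
    unfold fE; split_ifs <;> omega
  · -- value 2n+1 at k-1
    rw [zP_val]
    show fE n k (k-1) = 2*n+1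
    unfold fE; split_ifs <;> omega
  · -- uniqueness
    intro z' hsgn' hmem' hmin'
    have hxy : z'⁻¹ * zP n k hk hkn ∈ WP n k := by
      have hg : z'⁻¹ * zP n k hk hkn
          = ((s2t1 n)⁻¹ * z')⁻¹ * ((s2t1 n)⁻¹ * zP n k hk hkn) := by group
      rw [hg]
      exact mul_mem (inv_mem hmem') (z_mem_coset n k hk hkn)
    have hle : len n z' ≤ 2*n+2-k := by
      have h2 := hmin' (z'⁻¹ * zP n k hk hkn) hxy
      rw [mul_inv_cancel_left, hlen] at h2
      exact h2
    have hq' : (zP n k hk hkn)⁻¹ * z' ∈ WP n k := by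
      have hg : (zP n k hk hkn)⁻¹ * z'
          = ((s2t1 n)⁻¹ * zP n k hk hkn)⁻¹ * ((s2t1 n)⁻¹ * z') := by group
      rw [hg]
      exact mul_mem (inv_mem (z_mem_coset n k hk hkn)) hmem'
    have hexpr' : ∃ l : List (Fin (n+1)), (l.map (sgen n)).prod = z' := by
      obtain ⟨l2, hl2⟩ := WP_expr hq'
      exact ⟨zWord n k ++ l2, by
        rw [List.map_append, List.prod_append, zWord_prod n k hk hkn, hl2, mul_inv_cancel_left]⟩
    have hch' := coset_char n k hk hkn hmem'
    have h1 := NC_le_two_len n z' hexpr'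
    exact (NC_main n k hk hkn hsgn' hch').2 (by omega)
end

section
/- Fix integers 1 ≤ k ≤ n+1. There is a bijection between the set Λ^{2n+2}_k of (n+1-k)-strict partitions λ = (λ_1 ≥ ⋯ ≥ λ_k) with 2n+2-k ≥ λ_1 and λ_k ≥ 0, and the set W^{P_k} of minimal length representatives (identified with increasing k-subsets of {1,...,2n+2} avoiding pairs {i, 2n+3-i}), given by λ ↦ w with w(j) = 2n+3-k-λ_j + #{i < j : λ_i + λ_j ≤ 2(n+1-k) + j - i}, with inverse w ↦ λ given by λ_j = 2n+3-k-w(j) + #{i < j : w(i)+w(j) > 2n+3}. -/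
/-- `Λ^{2n+2}_k`: `(n+1-k)`-strict partitions `2n+2-k ≥ λ_1 ≥ ⋯ ≥ λ_k ≥ 0`. -/
def IsEvenPart (n k : ℕ) (lam : Fin k → ℤ) : Prop :=
  (∀ j, 0 ≤ lam j) ∧ (∀ j, lam j ≤ (2*n+2 : ℤ) - k) ∧
  (∀ i j : Fin k, i ≤ j → lam j ≤ lam i) ∧
  (∀ j : Fin k, ∀ h : (j : ℕ) + 1 < k, (n : ℤ) + 1 - k < lam j → lam ⟨(j : ℕ)+1, h⟩ < lam j)

/-- Increasing `k`-element sequences in `{1,...,2n+2}` avoiding pairs `{i, 2n+3-i}`,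
identifying the minimal length representatives `W^{P_k}` of type `C_{n+1}`. -/
def IsIncSeq (n k : ℕ) (w : Fin k → ℤ) : Prop :=
  StrictMono w ∧ (∀ j, 1 ≤ w j) ∧ (∀ j, w j ≤ (2*n+2 : ℤ)) ∧
  (∀ i j : Fin k, w i + w j ≠ (2*n+3 : ℤ))

/-- `λ ↦ w`:  `w(j) = 2n+3-k-λ_j + #{i < j : λ_i + λ_j ≤ 2(n+1-k) + j - i}`. -/
def toSeq (n k : ℕ) (lam : Fin k → ℤ) (j : Fin k) : ℤ :=
  (2*n+3 : ℤ) - k - lam j +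
    (Finset.univ.filter (fun i : Fin k => i < j ∧
      lam i + lam j ≤ 2*((n : ℤ)+1-k) + ((j : ℕ) : ℤ) - ((i : ℕ) : ℤ))).card

/-- `w ↦ λ`:  `λ_j = 2n+3-k-w(j) + #{i < j : w(i)+w(j) > 2n+3}`. -/
def toPart (n k : ℕ) (w : Fin k → ℤ) (j : Fin k) : ℤ :=
  (2*n+3 : ℤ) - k - w j +
    (Finset.univ.filter (fun i : Fin k => i < j ∧ w i + w j > (2*n+3 : ℤ))).card

private lemma chain_mono {k : ℕ} {w : Fin k → ℤ} (hw : ∀ a b : Fin k, a < b → w a < w b) :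
    ∀ (d : ℕ) (i j : Fin k), (j : ℕ) = (i : ℕ) + d → w i + d ≤ w j := by
  intro d
  induction d with
  | zero =>
    intro i j h
    have : i = j := Fin.ext (by omega)
    subst this; simp
  | succ d ih =>
    intro i j h
    have hm : (i : ℕ) + d < k := by have := j.isLt; omega
    have h1 := ih i ⟨(i : ℕ) + d, hm⟩ rfl
    have h2 : w ⟨(i : ℕ) + d, hm⟩ < w j := hw _ _ (by simp [Fin.lt_def]; omega)
    push_cast at h1 ⊢
    linarith

private lemma strictMono_of_consec {k : ℕ} {f : Fin k → ℤ}
    (h : ∀ (j : Fin k) (hj : (j : ℕ) + 1 < k), f j < f ⟨(j : ℕ) + 1, hj⟩) :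
    StrictMono f := by
  have key : ∀ (d : ℕ) (i j : Fin k), (j : ℕ) = (i : ℕ) + (d+1) → f i < f j := by
    intro d
    induction d with
    | zero =>
      intro i j hd
      have hj : (i : ℕ) + 1 < k := by have := j.isLt; omega
      have := h i hj
      have hij : (⟨(i : ℕ) + 1, hj⟩ : Fin k) = j := Fin.ext (by simp; omega)
      rwa [hij] at this
    | succ d ih =>
      intro i j hd
      have hm : (i : ℕ) + (d+1) < k := by have := j.isLt; omega
      refine lt_trans (ih i ⟨(i : ℕ) + (d+1), hm⟩ rfl) ?_
      have hj : ((⟨(i : ℕ) + (d+1), hm⟩ : Fin k) : ℕ) + 1 < k := by have := j.isLt; simp; omega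
      have := h ⟨(i : ℕ) + (d+1), hm⟩ hj
      have hij : (⟨((⟨(i : ℕ) + (d+1), hm⟩ : Fin k) : ℕ) + 1, hj⟩ : Fin k) = j := Fin.ext (by simp; omega)
      rwa [hij] at this
  intro i j hij
  have hlt : (i : ℕ) < (j : ℕ) := hij
  exact key ((j : ℕ) - (i : ℕ) - 1) i j (by omega)

private lemma antitone_of_consec {k : ℕ} {f : Fin k → ℤ}
    (h : ∀ (j : Fin k) (hj : (j : ℕ) + 1 < k), f ⟨(j : ℕ) + 1, hj⟩ ≤ f j) :
    ∀ i j : Fin k, i ≤ j → f j ≤ f i := by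
  have key : ∀ (d : ℕ) (i j : Fin k), (j : ℕ) = (i : ℕ) + d → f j ≤ f i := by
    intro d
    induction d with
    | zero =>
      intro i j hd
      have : i = j := Fin.ext (by omega)
      subst this; exact le_refl _
    | succ d ih =>
      intro i j hd
      have hm : (i : ℕ) + d < k := by have := j.isLt; omega
      refine le_trans ?_ (ih i ⟨(i : ℕ) + d, hm⟩ rfl)
      have hj : ((⟨(i : ℕ) + d, hm⟩ : Fin k) : ℕ) + 1 < k := by have := j.isLt; simp; omega
      have := h ⟨(i : ℕ) + d, hm⟩ hj
      have hij : (⟨((⟨(i : ℕ) + d, hm⟩ : Fin k) : ℕ) + 1, hj⟩ : Fin k) = j := Fin.ext (by simp; omega)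
      rwa [hij] at this
  intro i j hij
  exact key ((j : ℕ) - (i : ℕ)) i j (by have : (i:ℕ) ≤ j := hij; omega)

private lemma big_chain {n k : ℕ} {lam : Fin k → ℤ}
    (hmono : ∀ i j : Fin k, i ≤ j → lam j ≤ lam i)
    (hstrict : ∀ j : Fin k, ∀ h : (j : ℕ) + 1 < k, (n : ℤ) + 1 - k < lam j → lam ⟨(j : ℕ)+1, h⟩ < lam j) :
    ∀ (d : ℕ) (i j : Fin k), (j : ℕ) = (i : ℕ) + d → (n : ℤ) + 1 - k < lam j →
      lam j + d ≤ lam i := by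
  intro d
  induction d with
  | zero =>
    intro i j h _
    have : i = j := Fin.ext (by omega)
    subst this; simp
  | succ d ih =>
    intro i j h hbig
    have hm : (i : ℕ) + d < k := by have := j.isLt; omega
    set i' : Fin k := ⟨(i : ℕ) + d, hm⟩ with hi'
    have hle : i' ≤ j := by simp [Fin.le_def, hi']; omega
    have hbig' : (n : ℤ) + 1 - k < lam i' := lt_of_lt_of_le hbig (hmono i' j hle)
    have hstep : lam j < lam i' := by
      have h1 : (i' : ℕ) + 1 < k := by simpa [hi'] using (by have := j.isLt; omega : (i:ℕ) + d + 1 < k)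
      have := hstrict i' h1 hbig'
      have hj : (⟨(i' : ℕ) + 1, h1⟩ : Fin k) = j := Fin.ext (by simp [hi']; omega)
      rwa [hj] at this
    have h3 := ih i i' rfl hbig'
    push_cast at h3 ⊢
    linarith

private lemma icc_card_le {α : Type*} (s : Finset α) (f : α → ℤ) (a b : ℤ)
    (hf : ∀ x ∈ s, f x ∈ Finset.Icc a b) (hinj : Set.InjOn f s) :
    (s.card : ℤ) ≤ ((b + 1 - a).toNat : ℤ) := by
  have := Finset.card_le_card_of_injOn f hf hinj
  rw [Int.card_Icc] at this
  exact_mod_cast this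


private def cset (n k : ℕ) (lam : Fin k → ℤ) (j : Fin k) : Finset (Fin k) :=
  Finset.univ.filter (fun i : Fin k => i < j ∧
      lam i + lam j ≤ 2*((n : ℤ)+1-k) + ((j : ℕ) : ℤ) - ((i : ℕ) : ℤ))

private lemma toSeq_eq (n k : ℕ) (lam : Fin k → ℤ) (j : Fin k) :
    toSeq n k lam j = (2*n+3 : ℤ) - k - lam j + ((cset n k lam j).card : ℤ) := rfl

private lemma mem_cset {n k : ℕ} {lam : Fin k → ℤ} {i j : Fin k} :
    i ∈ cset n k lam j ↔ i < j ∧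
      lam i + lam j ≤ 2*((n : ℤ)+1-k) + ((j : ℕ) : ℤ) - ((i : ℕ) : ℤ) := by
  simp [cset]

section LamSide

variable {n k : ℕ} {lam : Fin k → ℤ}
  (hmono : ∀ i j : Fin k, i ≤ j → lam j ≤ lam i)
  (hstrict : ∀ j : Fin k, ∀ h : (j : ℕ) + 1 < k, (n : ℤ) + 1 - k < lam j → lam ⟨(j : ℕ)+1, h⟩ < lam j)

include hmono hstrict

private lemma cset_empty {j : Fin k} (hbig : (n : ℤ) + 1 - k < lam j) :
    cset n k lam j = ∅ := by
  rw [cset, Finset.filter_eq_empty_iff]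
  intro i _
  rintro ⟨hij, hc⟩
  have hijn : (i : ℕ) < (j : ℕ) := hij
  have hch := big_chain hmono hstrict ((j : ℕ) - (i : ℕ)) i j (by omega) hbig
  have hcast : (((j : ℕ) - (i : ℕ) : ℕ) : ℤ) = ((j : ℕ) : ℤ) - ((i : ℕ) : ℤ) := by omega
  rw [hcast] at hch
  linarith

private lemma cset_lb {i j : Fin k} (hij : i < j)
    (hc : lam i + lam j ≤ 2*((n : ℤ)+1-k) + ((j : ℕ) : ℤ) - ((i : ℕ) : ℤ)) :
    ((j : ℕ) : ℤ) - ((i : ℕ) : ℤ) ≤ ((cset n k lam j).card : ℤ) := by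
  have hsub : Finset.Ico i j ⊆ cset n k lam j := by
    intro i' hi'
    rw [Finset.mem_Ico] at hi'
    obtain ⟨hii', hi'j⟩ := hi'
    have hii'n : (i : ℕ) ≤ (i' : ℕ) := hii'
    have hi'jn : (i' : ℕ) < (j : ℕ) := hi'j
    rw [mem_cset]
    refine ⟨hi'j, ?_⟩
    rcases le_or_gt (lam i') ((n : ℤ) + 1 - k) with hsmall | hbig
    · have h1 : lam j ≤ lam i' := hmono i' j (le_of_lt hi'j)
      have hijn : (i : ℕ) < (j : ℕ) := hij
      linarith
    · have hch := big_chain hmono hstrict ((i' : ℕ) - (i : ℕ)) i i' (by omega) hbig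
      have hcast : (((i' : ℕ) - (i : ℕ) : ℕ) : ℤ) = ((i' : ℕ) : ℤ) - ((i : ℕ) : ℤ) := by omega
      rw [hcast] at hch
      linarith
  have hcard := Finset.card_le_card hsub
  rw [Fin.card_Ico] at hcard
  have hijn : (i : ℕ) < (j : ℕ) := hij
  omega

private lemma cset_ub {i j : Fin k} (hij : i < j) (hbig : (n : ℤ) + 1 - k < lam i)
    (hnc : ¬ (lam i + lam j ≤ 2*((n : ℤ)+1-k) + ((j : ℕ) : ℤ) - ((i : ℕ) : ℤ))) :
    ((cset n k lam j).card : ℤ) ≤ ((j : ℕ) : ℤ) - ((i : ℕ) : ℤ) - 1 := by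
  push_neg at hnc
  have hsub : cset n k lam j ⊆ Finset.Ioo i j := by
    intro i' hi'
    rw [mem_cset] at hi'
    obtain ⟨hi'j, hc⟩ := hi'
    rw [Finset.mem_Ioo]
    refine ⟨?_, hi'j⟩
    by_contra hle
    push_neg at hle
    have hlen : (i' : ℕ) ≤ (i : ℕ) := hle
    have hch := big_chain hmono hstrict ((i : ℕ) - (i' : ℕ)) i' i (by omega) hbig
    have hcast : (((i : ℕ) - (i' : ℕ) : ℕ) : ℤ) = ((i : ℕ) : ℤ) - ((i' : ℕ) : ℤ) := by omega
    rw [hcast] at hch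
    linarith
  have hcard := Finset.card_le_card hsub
  rw [Fin.card_Ioo] at hcard
  have hijn : (i : ℕ) < (j : ℕ) := hij
  omega

omit hmono hstrict in
private lemma cset_card_le (j : Fin k) : (cset n k lam j).card ≤ (j : ℕ) := by
  have hsub : cset n k lam j ⊆ Finset.Iio j := by
    intro i hi
    rw [mem_cset] at hi
    exact Finset.mem_Iio.mpr hi.1
  have := Finset.card_le_card hsub
  rwa [Fin.card_Iio] at this

end LamSide




section LamMain

variable {n k : ℕ} {lam : Fin k → ℤ}

private lemma key_equiv (hl : IsEvenPart n k lam) {i j : Fin k} (hij : i < j) :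
    ((toSeq n k lam i + toSeq n k lam j > (2*n+3 : ℤ)) ↔
      lam i + lam j ≤ 2*((n : ℤ)+1-k) + ((j : ℕ) : ℤ) - ((i : ℕ) : ℤ)) ∧
    toSeq n k lam i + toSeq n k lam j ≠ (2*n+3 : ℤ) := by
  obtain ⟨h0, h2, hmono, hstrict⟩ := hl
  have hijn : (i : ℕ) < (j : ℕ) := hij
  have hji : lam j ≤ lam i := hmono i j (le_of_lt hij)
  rw [toSeq_eq, toSeq_eq]
  rcases le_or_gt (lam j) ((n : ℤ) + 1 - k) with hbj | hbj
  · rcases le_or_gt (lam i) ((n : ℤ) + 1 - k) with hbi | hbi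
    · -- both parts small: both sides true
      have hci : (0 : ℤ) ≤ ((cset n k lam i).card : ℤ) := by positivity
      have hcj : (0 : ℤ) ≤ ((cset n k lam j).card : ℤ) := by positivity
      constructor
      · constructor
        · intro _; omega
        · intro _; omega
      · omega
    · -- lam j small, lam i big
      have hei := cset_empty hmono hstrict hbi
      rw [hei]
      by_cases hc : lam i + lam j ≤ 2*((n : ℤ)+1-k) + ((j : ℕ) : ℤ) - ((i : ℕ) : ℤ)
      · have hlb := cset_lb hmono hstrict hij hc
        simp only [Finset.card_empty, Nat.cast_zero]
        constructor
        · constructor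
          · intro _; exact hc
          · intro _; omega
        · omega
      · have hub := cset_ub hmono hstrict hij hbi hc
        simp only [Finset.card_empty, Nat.cast_zero]
        constructor
        · constructor
          · intro hgt; omega
          · intro hcc; exact absurd hcc hc
        · omega
  · -- lam j big, hence lam i big: both sides false
    have hbi : (n : ℤ) + 1 - k < lam i := lt_of_lt_of_le hbj hji
    have hei := cset_empty hmono hstrict hbi
    have hej := cset_empty hmono hstrict hbj
    rw [hei, hej]
    simp only [Finset.card_empty, Nat.cast_zero]
    have hch := big_chain hmono hstrict ((j : ℕ) - (i : ℕ)) i j (by omega) hbj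
    have hcast : (((j : ℕ) - (i : ℕ) : ℕ) : ℤ) = ((j : ℕ) : ℤ) - ((i : ℕ) : ℤ) := by omega
    rw [hcast] at hch
    constructor
    · constructor
      · intro hgt; omega
      · intro hcc; omega
    · omega

private lemma partA (hl : IsEvenPart n k lam) : IsIncSeq n k (toSeq n k lam) := by
  obtain ⟨h0, h2, hmono, hstrict⟩ := hl
  refine ⟨?_, ?_, ?_, ?_⟩
  · -- StrictMono
    apply strictMono_of_consec
    intro j hj
    set j' : Fin k := ⟨(j : ℕ) + 1, hj⟩ with hj'def
    have hjj' : j < j' := by simp [Fin.lt_def, hj'def]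
    have hjj'le : j ≤ j' := le_of_lt hjj'
    have hsub : cset n k lam j ⊆ cset n k lam j' := by
      intro i hi
      rw [mem_cset] at hi ⊢
      obtain ⟨hij, hc⟩ := hi
      have h1 : lam j' ≤ lam j := hmono j j' hjj'le
      have h2' : ((j' : ℕ) : ℤ) = ((j : ℕ) : ℤ) + 1 := by simp [hj'def]
      exact ⟨lt_trans hij hjj', by rw [h2']; linarith⟩
    rcases lt_or_eq_of_le (hmono j j' hjj'le) with hlt | heq
    · have := Finset.card_le_card hsub
      rw [toSeq_eq, toSeq_eq]
      omega
    · -- lam j' = lam j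
      have hsmall : lam j ≤ (n : ℤ) + 1 - k := by
        by_contra hbig
        push_neg at hbig
        exact absurd heq (ne_of_lt (hstrict j hj hbig))
      have hjmem : j ∈ cset n k lam j' := by
        rw [mem_cset]
        refine ⟨hjj', ?_⟩
        have h2' : ((j' : ℕ) : ℤ) = ((j : ℕ) : ℤ) + 1 := by simp [hj'def]
        rw [h2', ← heq]
        linarith
      have hjnot : j ∉ cset n k lam j := by
        rw [mem_cset]; rintro ⟨hjj, -⟩; exact absurd hjj (lt_irrefl j)
      have hsub2 : insert j (cset n k lam j) ⊆ cset n k lam j' :=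
        Finset.insert_subset hjmem hsub
      have hcard := Finset.card_le_card hsub2
      rw [Finset.card_insert_of_notMem hjnot] at hcard
      rw [toSeq_eq, toSeq_eq, ← heq]
      omega
  · -- 1 ≤ w j
    intro j
    rw [toSeq_eq]
    have := h2 j
    have hci : (0 : ℤ) ≤ ((cset n k lam j).card : ℤ) := by positivity
    omega
  · -- w j ≤ 2n+2
    intro j
    rw [toSeq_eq]
    have hcl := cset_card_le (n := n) (lam := lam) j
    have := h0 j
    have := j.isLt
    omega
  · -- pair-free
    have key : ∀ i j : Fin k, i < j → toSeq n k lam i + toSeq n k lam j ≠ (2*n+3 : ℤ) :=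
      fun i j hij => (key_equiv ⟨h0, h2, hmono, hstrict⟩ hij).2
    intro i j
    rcases lt_trichotomy i j with hlt | heq | hgt
    · exact key i j hlt
    · subst heq
      rw [toSeq_eq]
      intro hcon
      omega
    · rw [add_comm]
      exact key j i hgt

private lemma rt1 (hl : IsEvenPart n k lam) : toPart n k (toSeq n k lam) = lam := by
  funext j
  have hset : (Finset.univ.filter (fun i : Fin k => i < j ∧
      toSeq n k lam i + toSeq n k lam j > (2*n+3 : ℤ))) = cset n k lam j := by
    apply Finset.ext
    intro i
    rw [Finset.mem_filter, mem_cset]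
    simp only [Finset.mem_univ, true_and]
    exact and_congr_right fun hij => (key_equiv hl hij).1
  show (2*n+3 : ℤ) - k - toSeq n k lam j + _ = lam j
  rw [hset, toSeq_eq]
  ring

end LamMain

section SeqSide

private def dset (n k : ℕ) (w : Fin k → ℤ) (j : Fin k) : Finset (Fin k) :=
  Finset.univ.filter (fun i : Fin k => i < j ∧ w i + w j > (2*n+3 : ℤ))

private lemma toPart_eq (n k : ℕ) (w : Fin k → ℤ) (j : Fin k) :
    toPart n k w j = (2*n+3 : ℤ) - k - w j + ((dset n k w j).card : ℤ) := rfl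

private lemma mem_dset {n k : ℕ} {w : Fin k → ℤ} {i j : Fin k} :
    i ∈ dset n k w j ↔ i < j ∧ w i + w j > (2*n+3 : ℤ) := by
  simp [dset]

variable {n k : ℕ} {w : Fin k → ℤ}

private lemma dset_empty (hsm : StrictMono w) {j : Fin k} (hwj : w j ≤ (n : ℤ) + 1) :
    dset n k w j = ∅ := by
  rw [dset, Finset.filter_eq_empty_iff]
  intro i _
  rintro ⟨hij, hgt⟩
  have := hsm hij
  omega

private lemma dset_le (hsm : StrictMono w) (hpf : ∀ i j : Fin k, w i + w j ≠ (2*n+3 : ℤ))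
    {j : Fin k} : ((dset n k w j).card : ℤ) ≤ ((w j - n - 2).toNat : ℤ) := by
  have h := icc_card_le (dset n k w j) (fun i => min (w i) (2*n+3 - w i))
      (2*n+4 - w j) ((n : ℤ) + 1) ?_ ?_
  · have heq : ((n : ℤ) + 1 + 1 - (2*n+4 - w j)) = w j - n - 2 := by ring
    rwa [heq] at h
  · intro x hx
    rw [mem_dset] at hx
    obtain ⟨hxj, hgt⟩ := hx
    have hlt : w x < w j := hsm hxj
    rw [Finset.mem_Icc]
    rcases le_total (w x) (2*n+3 - w x) with hm | hm
    · rw [min_eq_left hm]; omega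
    · rw [min_eq_right hm]; omega
  · intro x hx y hy heq
    simp only at heq
    rcases min_cases (w x) (2*n+3 - w x) with ⟨e1, -⟩ | ⟨e1, -⟩ <;>
      rcases min_cases (w y) (2*n+3 - w y) with ⟨e2, -⟩ | ⟨e2, -⟩ <;>
      rw [e1, e2] at heq
    · exact hsm.injective heq
    · exact absurd (by omega : w x + w y = (2*n+3 : ℤ)) (hpf x y)
    · exact absurd (by omega : w x + w y = (2*n+3 : ℤ)) (hpf x y)
    · exact hsm.injective (by omega : w x = w y)

private lemma dset_card_le (j : Fin k) : (dset n k w j).card ≤ (j : ℕ) := by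
  have hsub : dset n k w j ⊆ Finset.Iio j := by
    intro i hi
    rw [mem_dset] at hi
    exact Finset.mem_Iio.mpr hi.1
  have := Finset.card_le_card hsub
  rwa [Fin.card_Iio] at this

private lemma w_low (hsm : StrictMono w) (h1 : ∀ j, 1 ≤ w j) (j : Fin k) :
    ((j : ℕ) : ℤ) + 1 ≤ w j := by
  have h0 : 0 < k := j.pos
  have := chain_mono (fun a b h => hsm h) (j : ℕ) ⟨0, h0⟩ j (by simp)
  have := h1 ⟨0, h0⟩
  push_cast at *
  linarith

private lemma partB (hw : IsIncSeq n k w) : IsEvenPart n k (toPart n k w) := by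
  obtain ⟨hsm, h1, h2, hpf⟩ := hw
  refine ⟨?_, ?_, ?_, ?_⟩
  · -- 0 ≤ lam j
    intro j
    set eset : Finset (Fin k) :=
      Finset.univ.filter (fun i : Fin k => i < j ∧ w i + w j < (2*n+3 : ℤ)) with heset
    have hpartition : (dset n k w j).card + eset.card = (j : ℕ) := by
      have hunion : dset n k w j ∪ eset = Finset.Iio j := by
        apply Finset.ext
        intro i
        rw [Finset.mem_union, mem_dset, heset, Finset.mem_filter, Finset.mem_Iio]
        simp only [Finset.mem_univ, true_and]
        constructor
        · rintro (⟨h, -⟩ | ⟨h, -⟩) <;> exact h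
        · intro hij
          have hne := hpf i j
          rcases lt_trichotomy (w i + w j) (2*n+3 : ℤ) with h | h | h
          · exact Or.inr ⟨hij, h⟩
          · exact absurd h hne
          · exact Or.inl ⟨hij, h⟩
      have hdis : Disjoint (dset n k w j) eset := by
        rw [Finset.disjoint_left]
        intro a ha hb
        rw [mem_dset] at ha
        rw [heset, Finset.mem_filter] at hb
        omega
      have := Finset.card_union_of_disjoint hdis
      rw [hunion, Fin.card_Iio] at this
      omega
    -- second bound via injection
    set F : Finset (Fin k) :=
      Finset.univ.filter (fun i : Fin k => (i < j ∧ w i + w j < (2*n+3 : ℤ)) ∨ j < i) with hF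
    have hFcard : F.card = eset.card + (k - 1 - (j : ℕ)) := by
      rw [hF, Finset.filter_or]
      have hioi : Finset.univ.filter (fun i : Fin k => j < i) = Finset.Ioi j := by
        apply Finset.ext; intro i; simp
      rw [hioi, ← heset]
      rw [Finset.card_union_of_disjoint]
      · rw [Fin.card_Ioi]
      · rw [Finset.disjoint_left]
        intro a ha hb
        rw [heset, Finset.mem_filter] at ha
        rw [Finset.mem_Ioi] at hb
        have h1' : (a : ℕ) < (j : ℕ) := ha.2.1
        have h2' : (j : ℕ) < (a : ℕ) := hb
        omega
    have hFbound := icc_card_le F (fun i => if i < j then w i else 2*n+3 - w i)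
        1 (2*n+2 - w j) ?_ ?_
    · rw [toPart_eq]
      have hjk := j.isLt
      have hwj := h2 j
      omega
    · intro x hx
      rw [hF, Finset.mem_filter] at hx
      rw [Finset.mem_Icc]
      rcases hx.2 with ⟨hxj, hlt⟩ | hjx
      · rw [if_pos hxj]
        have := h1 x
        omega
      · rw [if_neg (by intro hc; have h1' : (x:ℕ) < (j:ℕ) := hc; have h2' : (j:ℕ) < (x:ℕ) := hjx; omega)]
        have := h2 x
        have := hsm hjx
        omega
    · intro x hx y hy heq
      simp only at heq
      by_cases hxj : x < j <;> by_cases hyj : y < j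
      · rw [if_pos hxj, if_pos hyj] at heq
        exact hsm.injective heq
      · rw [if_pos hxj, if_neg hyj] at heq
        exact absurd (by omega : w x + w y = (2*n+3 : ℤ)) (hpf x y)
      · rw [if_neg hxj, if_pos hyj] at heq
        exact absurd (by omega : w x + w y = (2*n+3 : ℤ)) (hpf x y)
      · rw [if_neg hxj, if_neg hyj] at heq
        exact hsm.injective (by omega : w x = w y)
  · -- lam j ≤ 2n+2-k
    intro j
    rw [toPart_eq]
    have := w_low hsm h1 j
    have := dset_card_le (n := n) (w := w) j
    omega
  · -- antitone
    apply antitone_of_consec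
    intro j hj
    set j' : Fin k := ⟨(j : ℕ) + 1, hj⟩ with hj'def
    have hjj' : j < j' := by simp [Fin.lt_def, hj'def]
    have hww : w j < w j' := hsm hjj'
    have hBA : dset n k w j ⊆ dset n k w j' := by
      intro i hi
      rw [mem_dset] at hi ⊢
      exact ⟨lt_trans hi.1 hjj', by omega⟩
    have hsd := Finset.card_sdiff_add_card_eq_card hBA
    have hABcard : ((dset n k w j' \ dset n k w j).card : ℤ) ≤ w j' - w j := by
      have hinj := Finset.card_le_card_of_injOn (fun i => w i)
          (s := dset n k w j' \ dset n k w j)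
          (t := insert (w j) (Finset.Icc (2*n+4 - w j') (2*n+2 - w j))) ?_ ?_
      · have hic : (Finset.Icc (2*n+4 - w j') (2*n+2 - w j)).card = (w j' - w j - 1).toNat := by
          rw [Int.card_Icc]
          congr 1
          ring
        have := Finset.card_insert_le (w j) (Finset.Icc (2*n+4 - w j') (2*n+2 - w j))
        omega
      · intro x hx
        rw [Finset.mem_coe, Finset.mem_sdiff, mem_dset, mem_dset] at hx
        obtain ⟨⟨hxj', hgt⟩, hnot⟩ := hx
        by_cases hxj : x < j
        · have hle : w x + w j ≤ 2*n+3 := by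
            by_contra hc
            exact hnot ⟨hxj, by omega⟩
          have hne := hpf x j
          rw [Finset.mem_coe, Finset.mem_insert, Finset.mem_Icc]
          dsimp only
          right
          omega
        · have hxej : x = j := by
            have hx1 : (x : ℕ) < (j' : ℕ) := hxj'
            have hx2 : ¬ (x : ℕ) < (j : ℕ) := fun hc => hxj hc
            apply Fin.ext
            simp [hj'def] at hx1
            omega
          subst hxej
          exact Finset.mem_insert_self _ _
      · intro x _ y _ hxy
        exact hsm.injective hxy
    have hj'v : (j' : ℕ) = (j : ℕ) + 1 := by rw [hj'def]
    show toPart n k w j' ≤ toPart n k w j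
    rw [toPart_eq, toPart_eq]
    omega
  · -- strict
    intro j hj hbig
    set j' : Fin k := ⟨(j : ℕ) + 1, hj⟩ with hj'def
    have hjj' : j < j' := by simp [Fin.lt_def, hj'def]
    have hww : w j < w j' := hsm hjj'
    have hwj : w j ≤ (n : ℤ) + 1 := by
      by_contra hc
      push_neg at hc
      have := dset_le hsm hpf (j := j)
      rw [toPart_eq] at hbig
      omega
    have hdj : dset n k w j = ∅ := dset_empty hsm hwj
    have hdj' := icc_card_le (dset n k w j') (fun i => w i) (2*n+4 - w j') (w j) ?_ ?_
    · have hj'v : (j' : ℕ) = (j : ℕ) + 1 := by rw [hj'def]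
      show toPart n k w j' < toPart n k w j
      rw [toPart_eq, toPart_eq, hdj]
      simp only [Finset.card_empty, Nat.cast_zero]
      omega
    · intro x hx
      rw [mem_dset] at hx
      obtain ⟨hxj', hgt⟩ := hx
      have hxle : x ≤ j := by
        have hx1 : (x : ℕ) < (j' : ℕ) := hxj'
        simp [hj'def] at hx1
        exact Fin.le_def.mpr (by omega)
      have hwx : w x ≤ w j := hsm.monotone hxle
      rw [Finset.mem_Icc]
      omega
    · intro x _ y _ hxy
      exact hsm.injective hxy

end SeqSide

section SeqMain

variable {n k : ℕ} {w : Fin k → ℤ}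

private lemma key_equiv2 (hw : IsIncSeq n k w) {i j : Fin k} (hij : i < j) :
    (toPart n k w i + toPart n k w j ≤ 2*((n : ℤ)+1-k) + ((j : ℕ) : ℤ) - ((i : ℕ) : ℤ)) ↔
      w i + w j > (2*n+3 : ℤ) := by
  obtain ⟨hsm, h1, h2, hpf⟩ := hw
  have hijn : (i : ℕ) < (j : ℕ) := hij
  have hwij : w i < w j := hsm hij
  rw [toPart_eq, toPart_eq]
  rcases le_or_gt (w j) ((n : ℤ) + 1) with hwj | hwj
  · -- both unbarred: both sides false
    have hwi : w i ≤ (n : ℤ) + 1 := le_of_lt (lt_of_lt_of_le hwij hwj)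
    rw [dset_empty hsm hwj, dset_empty hsm hwi]
    simp only [Finset.card_empty, Nat.cast_zero]
    have hch := chain_mono (fun a b h => hsm h) ((j : ℕ) - (i : ℕ)) i j (by omega)
    have hcast : ((((j : ℕ) - (i : ℕ) : ℕ)) : ℤ) = ((j : ℕ) : ℤ) - ((i : ℕ) : ℤ) := by omega
    rw [hcast] at hch
    constructor
    · intro h; omega
    · intro h; omega
  · rcases le_or_gt ((n : ℤ) + 2) (w i) with hwi | hwi
    · -- both barred: both sides true
      have hdi := dset_le hsm hpf (j := i)
      have hdj := dset_le hsm hpf (j := j)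
      constructor
      · intro _; omega
      · intro _; omega
    · -- mixed: w i ≤ n+1 < w j
      have hwi' : w i ≤ (n : ℤ) + 1 := by omega
      rw [dset_empty hsm hwi']
      simp only [Finset.card_empty, Nat.cast_zero]
      by_cases hsum : w i + w j > (2*n+3 : ℤ)
      · -- LHS must be true
        set S1 : Finset (Fin k) :=
          Finset.univ.filter (fun x : Fin k => x < j ∧ w x + w j > (2*n+3 : ℤ) ∧ x ≤ i) with hS1
        have hS : dset n k w j ⊆ S1 ∪ Finset.Ioo i j := by
          intro x hx
          rw [mem_dset] at hx
          rw [Finset.mem_union, hS1, Finset.mem_filter, Finset.mem_Ioo]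
          rcases le_or_gt x i with hxi | hxi
          · exact Or.inl ⟨Finset.mem_univ x, hx.1, hx.2, hxi⟩
          · exact Or.inr ⟨hxi, hx.1⟩
        have hcard1 := icc_card_le S1 (fun x => w x) (2*n+4 - w j) (w i) ?_ ?_
        · have hcard2 : (Finset.Ioo i j).card = (j : ℕ) - (i : ℕ) - 1 := Fin.card_Ioo i j
          have hcard3 := Finset.card_le_card hS
          have hcard4 := Finset.card_union_le S1 (Finset.Ioo i j)
          constructor
          · intro _; exact hsum
          · intro _; omega
        · intro x hx
          rw [hS1, Finset.mem_filter] at hx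
          obtain ⟨-, hxj, hgt, hxi⟩ := hx
          have hwx : w x ≤ w i := hsm.monotone hxi
          rw [Finset.mem_Icc]
          omega
        · intro x _ y _ hxy
          exact hsm.injective hxy
      · -- LHS must be false
        have hne := hpf i j
        set t : ℕ := (2*n+3 - w j - w i).toNat with ht
        have htz : (t : ℤ) = 2*n+3 - w j - w i := by
          rw [ht]; omega
        by_cases hs : (i : ℕ) + t < (j : ℕ)
        · have hklt : (i : ℕ) + t < k := lt_trans hs j.isLt
          set a : Fin k := ⟨(i : ℕ) + t, hklt⟩ with ha
          have hav : (a : ℕ) = (i : ℕ) + t := by rw [ha]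
          have hsub : Finset.Ico a j ⊆ dset n k w j := by
            intro i' hi'
            rw [Finset.mem_Ico] at hi'
            have hai' : (a : ℕ) ≤ (i' : ℕ) := hi'.1
            rw [hav] at hai'
            have hch := chain_mono (fun a b h => hsm h) ((i' : ℕ) - (i : ℕ)) i i' (by omega)
            have hcast : ((((i' : ℕ) - (i : ℕ) : ℕ)) : ℤ) = ((i' : ℕ) : ℤ) - ((i : ℕ) : ℤ) := by
              omega
            rw [hcast] at hch
            rw [mem_dset]
            refine ⟨hi'.2, ?_⟩
            have hne' := hpf i' j
            have hii' : ((i : ℕ) : ℤ) + t ≤ ((i' : ℕ) : ℤ) := by exact_mod_cast hai'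
            omega
          have hcard := Finset.card_le_card hsub
          rw [Fin.card_Ico, hav] at hcard
          constructor
          · intro hLHS; omega
          · intro hGT; exact absurd hGT hsum
        · constructor
          · intro hLHS
            have hd0 : (0 : ℤ) ≤ ((dset n k w j).card : ℤ) := by positivity
            omega
          · intro hGT; exact absurd hGT hsum

private lemma rt2 (hw : IsIncSeq n k w) : toSeq n k (toPart n k w) = w := by
  funext j
  have hset : (Finset.univ.filter (fun i : Fin k => i < j ∧
      toPart n k w i + toPart n k w j ≤ 2*((n : ℤ)+1-k) + ((j : ℕ) : ℤ) - ((i : ℕ) : ℤ)))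
      = dset n k w j := by
    apply Finset.ext
    intro i
    rw [Finset.mem_filter, mem_dset]
    simp only [Finset.mem_univ, true_and]
    exact and_congr_right fun hij => key_equiv2 hw hij
  show (2*n+3 : ℤ) - k - toPart n k w j + _ = w j
  rw [hset, toPart_eq]
  ring

end SeqMain


/-- The maps `toSeq` and `toPart` are mutually inverse bijections between the set
`Λ^{2n+2}_k` of `(n+1-k)`-strict partitions and the set of increasing `k`-element
sequences representing `W^{P_k}`. -/
theorem stmt6 (n k : ℕ) (hk : 1 ≤ k) (hkn : k ≤ n+1) :
    (∀ lam, IsEvenPart n k lam → IsIncSeq n k (toSeq n k lam)) ∧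
    (∀ w, IsIncSeq n k w → IsEvenPart n k (toPart n k w)) ∧
    (∀ lam, IsEvenPart n k lam → toPart n k (toSeq n k lam) = lam) ∧
    (∀ w, IsIncSeq n k w → toSeq n k (toPart n k w) = w) :=
  ⟨fun _ hl => partA hl, fun _ hw => partB hw, fun _ hl => rt1 hl, fun _ hw => rt2 hw⟩
end

section
/- In the Weyl group of type C_{n+1} with P = P_k (1 ≤ k ≤ n+1), the degrees of the edges at the identity coset in the moment graph of IG(k,2n+2) are: the edge to w = s_{t_i+t_j}W_P with 1 ≤ i < j ≤ k has degree 2 (i.e., (t_i+t_j)^∨ ≡ 2α_k^∨ mod Δ_P^∨), while edges corresponding to roots t_i - t_j (i ≤ k < j), t_i + t_j (i ≤ k < j ≤ n+1), and 2t_i (i ≤ k) have degree 1. -/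
def epi (n : ℕ) (i : Fin (n+1)) : Fin (n+1) → ℤ := Pi.single i 1

def cosimple (n : ℕ) (i : Fin (n+1)) : Fin (n+1) → ℤ :=
  if h : (i : ℕ) < n then epi n i - epi n ⟨(i : ℕ)+1, by omega⟩ else epi n i

def cospanP (n : ℕ) (k : Fin (n+1)) : Submodule ℤ (Fin (n+1) → ℤ) :=
  Submodule.span ℤ {x | ∃ i : Fin (n+1), i ≠ k ∧ x = cosimple n i}

def phiF (n : ℕ) (k : Fin (n+1)) : (Fin (n+1) → ℤ) →ₗ[ℤ] ℤ where
  toFun x := ∑ i ∈ Finset.univ.filter (fun i : Fin (n+1) => i ≤ k), x i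
  map_add' x y := by simp [Finset.sum_add_distrib]
  map_smul' c x := by simp [Finset.mul_sum]

lemma phi_epi (n : ℕ) (k i : Fin (n+1)) :
    phiF n k (epi n i) = if i ≤ k then 1 else 0 := by
  simp [phiF, epi, Pi.single_apply, LinearMap.coe_mk, AddHom.coe_mk]

lemma phi_cosimple (n : ℕ) (k i : Fin (n+1)) :
    phiF n k (cosimple n i) = if i = k then 1 else 0 := by
  by_cases h : (i:ℕ) < n
  · rw [cosimple, dif_pos h, map_sub, phi_epi, phi_epi]
    have hik : (i ≤ k) ↔ (i:ℕ) ≤ (k:ℕ) := Iff.rfl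
    have h2 : ((⟨(i:ℕ)+1, by omega⟩ : Fin (n+1)) ≤ k) ↔ (i:ℕ)+1 ≤ (k:ℕ) := Iff.rfl
    have h3 : (i = k) ↔ (i:ℕ) = (k:ℕ) := Fin.ext_iff
    split_ifs with a b c <;> simp_all <;> omega
  · rw [cosimple, dif_neg h, phi_epi]
    have hin : (i:ℕ) = n := by omega
    have h3 : (i = k) ↔ (i:ℕ) = (k:ℕ) := Fin.ext_iff
    have hik : (i ≤ k) ↔ (i:ℕ) ≤ (k:ℕ) := Iff.rfl
    have hk : (k:ℕ) ≤ n := by omega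
    split_ifs with a b <;> simp_all <;> omega

lemma phi_span (n : ℕ) (k : Fin (n+1)) {x : Fin (n+1) → ℤ} (hx : x ∈ cospanP n k) :
    phiF n k x = 0 := by
  have : cospanP n k ≤ LinearMap.ker (phiF n k) := by
    rw [cospanP, Submodule.span_le]
    rintro _ ⟨i, hi, rfl⟩
    simp [LinearMap.mem_ker, phi_cosimple, hi]
  exact this hx

lemma diff_mem (n : ℕ) (k : Fin (n+1)) :
    ∀ m : ℕ, ∀ i i' : Fin (n+1), (i':ℕ) - (i:ℕ) ≤ m → i ≤ i' → i' ≤ k →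
      epi n i - epi n i' ∈ cospanP n k := by
  intro m
  induction m with
  | zero =>
    intro i i' h hle _
    have : i = i' := Fin.ext (by omega)
    simp [this]
  | succ m ih =>
    intro i i' h hle hk'
    by_cases he : i = i'
    · simp [he]
    · have hlt : (i:ℕ) < (i':ℕ) := lt_of_le_of_ne hle (fun c => he (Fin.ext c))
      have hin : (i:ℕ) < n := by
        have : (i':ℕ) ≤ (k:ℕ) := hk'
        omega
      have hne : i ≠ k := fun c => by
        have : (i:ℕ) = (k:ℕ) := by rw [c]
        have : (i':ℕ) ≤ (k:ℕ) := hk'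
        omega
      set i1 : Fin (n+1) := ⟨(i:ℕ)+1, by omega⟩ with hi1
      have hc : cosimple n i = epi n i - epi n i1 := dif_pos hin
      have heq : epi n i - epi n i' = cosimple n i + (epi n i1 - epi n i') := by
        rw [hc]; abel
      rw [heq]
      exact (cospanP n k).add_mem (Submodule.subset_span ⟨i, hne, rfl⟩)
        (ih i1 i' (by simp [hi1]; omega) (by
          show (i1:ℕ) ≤ (i':ℕ); simp [hi1]; omega) hk')

lemma gt_mem (n : ℕ) (k : Fin (n+1)) :
    ∀ m : ℕ, ∀ j : Fin (n+1), n - (j:ℕ) ≤ m → k < j → epi n j ∈ cospanP n k := by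
  intro m
  induction m with
  | zero =>
    intro j h hkj
    have hjn : (j:ℕ) = n := by have := j.isLt; omega
    have hne : j ≠ k := (ne_of_gt hkj)
    have : cosimple n j = epi n j := dif_neg (by omega)
    rw [← this]
    exact Submodule.subset_span ⟨j, hne, rfl⟩
  | succ m ih =>
    intro j h hkj
    by_cases hjn : (j:ℕ) < n
    · set j1 : Fin (n+1) := ⟨(j:ℕ)+1, by omega⟩ with hj1
      have hc : cosimple n j = epi n j - epi n j1 := dif_pos hjn
      have heq : epi n j = cosimple n j + epi n j1 := by rw [hc]; abel
      have hne : j ≠ k := ne_of_gt hkj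
      rw [heq]
      exact (cospanP n k).add_mem (Submodule.subset_span ⟨j, hne, rfl⟩)
        (ih j1 (by simp [hj1]; omega) (lt_trans hkj (by show (j:ℕ) < (j1:ℕ); simp [hj1])))
    · have hne : j ≠ k := ne_of_gt hkj
      have : cosimple n j = epi n j := dif_neg (by omega)
      rw [← this]
      exact Submodule.subset_span ⟨j, hne, rfl⟩

/-- Degrees of the edges at the identity in the moment graph of `IG(k, 2n+2)` (indices
0-based): the edge for `α = t_i + t_j` with `i < j ≤ k` has degree `2`
(`α^∨ ≡ 2α_k^∨ mod ℤΔ_{P_k}^∨`), while the edges for `t_i - t_j` (`i ≤ k < j`),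
`t_i + t_j` (`i ≤ k < j`) and `2t_i` (`i ≤ k`, with `(2t_i)^∨ = t_i`) have degree `1`. -/
theorem stmt13 (n : ℕ) (k : Fin (n+1)) :
    (∀ i j : Fin (n+1), i < j → j ≤ k →
      (epi n i + epi n j - (2 : ℤ) • cosimple n k ∈ cospanP n k ∧
        ∀ d : ℤ, epi n i + epi n j - d • cosimple n k ∈ cospanP n k → d = 2)) ∧
    (∀ i j : Fin (n+1), i ≤ k → k < j →
      (epi n i - epi n j - cosimple n k ∈ cospanP n k ∧
        ∀ d : ℤ, epi n i - epi n j - d • cosimple n k ∈ cospanP n k → d = 1)) ∧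
    (∀ i j : Fin (n+1), i ≤ k → k < j →
      (epi n i + epi n j - cosimple n k ∈ cospanP n k ∧
        ∀ d : ℤ, epi n i + epi n j - d • cosimple n k ∈ cospanP n k → d = 1)) ∧
    (∀ i : Fin (n+1), i ≤ k →
      (epi n i - cosimple n k ∈ cospanP n k ∧
        ∀ d : ℤ, epi n i - d • cosimple n k ∈ cospanP n k → d = 1)) := by
  have uniq : ∀ (x : Fin (n+1) → ℤ) (d : ℤ),
      x - d • cosimple n k ∈ cospanP n k → d = phiF n k x := by
    intro x d h
    have := phi_span n k h
    rw [map_sub, map_smul, phi_cosimple] at this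
    simp at this
    omega
  refine ⟨?_, ?_, ?_, ?_⟩
  · intro i j hij hjk
    have hik : i ≤ k := le_of_lt (lt_of_lt_of_le hij hjk)
    constructor
    · by_cases hkn : (k:ℕ) < n
      · set k1 : Fin (n+1) := ⟨(k:ℕ)+1, by omega⟩ with hk1
        have hc : cosimple n k = epi n k - epi n k1 := dif_pos hkn
        have heq : epi n i + epi n j - (2:ℤ) • cosimple n k
            = (epi n i - epi n k) + (epi n j - epi n k) + (2:ℤ) • epi n k1 := by
          rw [hc]; module
        rw [heq]
        refine (cospanP n k).add_mem ((cospanP n k).add_mem ?_ ?_)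
          ((cospanP n k).smul_mem _ ?_)
        · exact diff_mem n k n i k (by omega) hik le_rfl
        · exact diff_mem n k n j k (by omega) hjk le_rfl
        · exact gt_mem n k n k1 (by omega) (by show (k:ℕ) < (k1:ℕ); simp [hk1])
      · have hc : cosimple n k = epi n k := dif_neg hkn
        have heq : epi n i + epi n j - (2:ℤ) • cosimple n k
            = (epi n i - epi n k) + (epi n j - epi n k) := by rw [hc]; module
        rw [heq]
        exact (cospanP n k).add_mem (diff_mem n k n i k (by omega) hik le_rfl)
          (diff_mem n k n j k (by omega) hjk le_rfl)
    · intro d h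
      have := uniq _ d h
      rw [map_add, phi_epi, phi_epi, if_pos hik, if_pos hjk] at this
      omega
  · intro i j hik hkj
    have hjk : ¬ j ≤ k := not_le.mpr hkj
    constructor
    · have hkn : (k:ℕ) < n := by
        have h1 : (k:ℕ) < (j:ℕ) := hkj
        have := j.isLt; omega
      set k1 : Fin (n+1) := ⟨(k:ℕ)+1, by omega⟩ with hk1
      have hc : cosimple n k = epi n k - epi n k1 := dif_pos hkn
      have heq : epi n i - epi n j - cosimple n k
          = (epi n i - epi n k) + epi n k1 - epi n j := by rw [hc]; module
      rw [heq]
      refine (cospanP n k).sub_mem ((cospanP n k).add_mem ?_ ?_) ?_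
      · exact diff_mem n k n i k (by omega) hik le_rfl
      · exact gt_mem n k n k1 (by omega) (by show (k:ℕ) < (k1:ℕ); simp [hk1])
      · exact gt_mem n k n j (by omega) hkj
    · intro d h
      have := uniq _ d h
      rw [map_sub, phi_epi, phi_epi, if_pos hik, if_neg hjk] at this
      omega
  · intro i j hik hkj
    have hjk : ¬ j ≤ k := not_le.mpr hkj
    constructor
    · have hkn : (k:ℕ) < n := by
        have h1 : (k:ℕ) < (j:ℕ) := hkj
        have := j.isLt; omega
      set k1 : Fin (n+1) := ⟨(k:ℕ)+1, by omega⟩ with hk1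
      have hc : cosimple n k = epi n k - epi n k1 := dif_pos hkn
      have heq : epi n i + epi n j - cosimple n k
          = (epi n i - epi n k) + epi n k1 + epi n j := by rw [hc]; module
      rw [heq]
      refine (cospanP n k).add_mem ((cospanP n k).add_mem ?_ ?_) ?_
      · exact diff_mem n k n i k (by omega) hik le_rfl
      · exact gt_mem n k n k1 (by omega) (by show (k:ℕ) < (k1:ℕ); simp [hk1])
      · exact gt_mem n k n j (by omega) hkj
    · intro d h
      have := uniq _ d h
      rw [map_add, phi_epi, phi_epi, if_pos hik, if_neg hjk] at this
      omega
  · intro i hik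
    constructor
    · by_cases hkn : (k:ℕ) < n
      · set k1 : Fin (n+1) := ⟨(k:ℕ)+1, by omega⟩ with hk1
        have hc : cosimple n k = epi n k - epi n k1 := dif_pos hkn
        have heq : epi n i - cosimple n k = (epi n i - epi n k) + epi n k1 := by
          rw [hc]; module
        rw [heq]
        exact (cospanP n k).add_mem (diff_mem n k n i k (by omega) hik le_rfl)
          (gt_mem n k n k1 (by omega) (by show (k:ℕ) < (k1:ℕ); simp [hk1]))
      · have hc : cosimple n k = epi n k := dif_neg hkn
        have heq : epi n i - cosimple n k = epi n i - epi n k := by rw [hc]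
        rw [heq]
        exact diff_mem n k n i k (by omega) hik le_rfl
    · intro d h
      have h1 : d • cosimple n k = epi n i - (epi n i - d • cosimple n k) := by abel
      have := uniq _ d h
      rw [phi_epi, if_pos hik] at this
      omega
end
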